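/- arXiv:math/9711217 — 2 statements merged into one kernel-verified Lean document; each statement's English description precedes it below -/
import Mathlib

section
/- Case's equation for the moments of Chebyshev U zeros (Table 4): for every N ≥ 1 and every r ≥ 1, (2N − (r−1)) · m_{r+1}^{(U)}(N) = −r · m_{r−1}^{(U)}(N) + N · Σ_{s=0}^{r−1} ( m_{r−1−s}^{(U)}(N) · m_s^{(U)}(N) − m_{r−s}^{(U)}(N) · m_{s+1}^{(U)}(N) ). -/
section Aux
open Polynomial Polynomial.Chebyshev

lemma U_coeff_natDegree : ∀ n : ℕ, (U ℝ n).coeff n = 2 ^ n ∧ (U ℝ n).natDegree ≤ n := by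
  intro n
  induction n using Nat.strong_induction_on with
  | _ n ih =>
    match n with
    | 0 => simp [U_zero]
    | 1 => constructor
           · simp [U_one, coeff_X, Polynomial.coeff_ofNat_mul]
           · simpa using natDegree_mul_le (p := (2 : ℝ[X])) (q := X)
    | (k+2) =>
      obtain ⟨h1c, h1d⟩ := ih (k+1) (by omega)
      obtain ⟨h0c, h0d⟩ := ih k (by omega)
      have hU : U ℝ ((k:ℤ)+2) = 2 * X * U ℝ ((k:ℤ)+1) - U ℝ (k:ℤ) := U_add_two ℝ k
      have hcast : ((k+2 : ℕ) : ℤ) = (k:ℤ) + 2 := by push_cast; ring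
      have hcast1 : ((k+1 : ℕ) : ℤ) = (k:ℤ) + 1 := by push_cast; ring
      rw [hcast, hU]
      constructor
      · rw [coeff_sub]
        have hXmul : (2 * X * U ℝ ((k:ℤ)+1)).coeff (k+2) = 2 * (U ℝ ((k:ℤ)+1)).coeff (k+1) := by
          rw [mul_assoc, (map_ofNat Polynomial.C 2).symm, coeff_C_mul, coeff_X_mul]
        rw [hXmul, ← hcast1, h1c, coeff_eq_zero_of_natDegree_lt (lt_of_le_of_lt h0d (by omega))]
        ring
      · apply le_trans (natDegree_sub_le _ _)
        rw [max_le_iff]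
        refine ⟨le_trans (natDegree_mul_le) ?_, by omega⟩
        have : (2 * X : ℝ[X]).natDegree ≤ 1 := by
          simpa using natDegree_mul_le (p := (2 : ℝ[X])) (q := X)
        rw [← hcast1]
        omega

open Finset Real in
lemma U_factor (N : ℕ) (hN : 1 ≤ N) :
    U ℝ N = C ((2:ℝ)^N) * ∏ i ∈ range N, (X - C (cos (((i:ℝ)+1) * π / (N+1)))) := by
  set x : ℕ → ℝ := fun i => cos (((i:ℝ)+1) * π / (N+1)) with hx
  have hmem : ∀ i ∈ range N, ((i:ℝ)+1) * π / (N+1) ∈ Set.Ioo 0 π := by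
    intro i hi
    simp only [mem_range] at hi
    constructor
    · positivity
    · rw [div_lt_iff₀ (by positivity)]
      have : ((i:ℝ)+1) < (N:ℝ)+1 := by exact_mod_cast by omega
      nlinarith [Real.pi_pos]
  have hroot : ∀ i ∈ range N, (U ℝ N).eval (x i) = 0 := by
    intro i hi
    have h := U_real_cos (((i:ℝ)+1) * π / (N+1)) N
    have hsin : Real.sin (((i:ℝ)+1) * π / (N+1)) ≠ 0 := by
      have := hmem i hi
      exact ne_of_gt (Real.sin_pos_of_pos_of_lt_pi this.1 this.2)
    have hz : Real.sin (((N:ℝ) + 1) * (((i:ℝ)+1) * π / (N+1))) = 0 := by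
      have : ((N:ℝ) + 1) * (((i:ℝ)+1) * π / (N+1)) = ((i:ℝ)+1) * π := by
        field_simp
      rw [this]
      have : ((i:ℝ)+1) * π = (i+1 : ℤ) * π := by push_cast; ring
      rw [this, Real.sin_int_mul_pi]
    rw [show (((N:ℤ)) + 1 : ℝ) = ((N:ℝ)+1) by push_cast; ring] at h
    rw [hz] at h
    exact (mul_eq_zero.mp h).resolve_right hsin
  have hinj : Set.InjOn x (range N) := by
    intro i hi j hj hij
    have hmi := hmem i hi
    have hmj := hmem j hj
    have : ((i:ℝ)+1) * π / (N+1) = ((j:ℝ)+1) * π / (N+1) :=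
      Real.injOn_cos (Set.mem_Icc.mpr ⟨le_of_lt hmi.1, le_of_lt hmi.2⟩)
        (Set.mem_Icc.mpr ⟨le_of_lt hmj.1, le_of_lt hmj.2⟩) hij
    have hπ := Real.pi_pos
    have hN1 : (0:ℝ) < (N:ℝ)+1 := by positivity
    have h3 : ((i:ℝ)+1) * π = ((j:ℝ)+1) * π := by
      have h4 := congrArg (· * ((N:ℝ)+1)) this
      simpa [div_mul_cancel₀, hN1.ne'] using h4
    have h4 : (i:ℝ) = j := by
      have := mul_right_cancel₀ Real.pi_ne_zero h3
      linarith
    exact_mod_cast h4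
  set q : ℝ[X] := ∏ i ∈ range N, (X - C (x i)) with hq
  have hqmonic : q.Monic := monic_prod_of_monic _ _ (fun i _ => monic_X_sub_C (x i))
  have hqdeg : q.natDegree = N := by
    rw [hq, natDegree_prod _ _ (fun i _ => X_sub_C_ne_zero (x i))]
    simp
  set D : ℝ[X] := U ℝ N - C ((2:ℝ)^N) * q with hD
  obtain ⟨hUc, hUd⟩ := U_coeff_natDegree N
  have hqco : q.coeff N = 1 := by rw [← hqdeg]; exact hqmonic.coeff_natDegree
  have hDdeg : D.natDegree ≤ N := by
    apply le_trans (natDegree_sub_le _ _)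
    rw [max_le_iff]
    exact ⟨hUd, le_trans natDegree_mul_le (by simp [hqdeg])⟩
  have hcoeffN : D.coeff N = 0 := by
    rw [hD, coeff_sub, coeff_C_mul, hUc, hqco]; ring
  have hqeval : ∀ i ∈ range N, q.eval (x i) = 0 := by
    intro i hi
    rw [hq, eval_prod]
    exact Finset.prod_eq_zero hi (by simp)
  have hDzero : D = 0 := by
    by_contra hne
    apply hne
    apply eq_zero_of_natDegree_lt_card_of_eval_eq_zero' D ((range N).image x)
    · intro y hy
      obtain ⟨i, hi, rfl⟩ := Finset.mem_image.mp hy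
      rw [hD]
      simp [eval_sub, eval_mul, hroot i hi, hqeval i hi]
    · rw [Finset.card_image_of_injOn hinj, Finset.card_range]
      rcases lt_or_eq_of_le hDdeg with h | h
      · exact h
      · exact absurd (leadingCoeff_eq_zero.mp (by rw [leadingCoeff, h]; exact hcoeffN)) hne
  exact sub_eq_zero.mp hDzero


lemma U_ode_at_root (N : ℕ) (a : ℝ) (hs : Real.sin a ≠ 0)
    (h0 : Real.sin (((N:ℝ)+1) * a) = 0) :
    (1 - Real.cos a ^ 2) * eval (Real.cos a) (derivative (derivative (U ℝ N))) =
      3 * Real.cos a * eval (Real.cos a) (derivative (U ℝ N)) := by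
  set P : ℝ[X] := U ℝ N with hP
  have hcos : ∀ θ : ℝ, eval (Real.cos θ) P * Real.sin θ = Real.sin (((N:ℝ)+1) * θ) := by
    intro θ
    have := U_real_cos θ N
    rwa [show (((N:ℤ)) + 1 : ℝ) = ((N:ℝ)+1) by push_cast; ring] at this
  -- u, v, w at angle θ
  have hu : ∀ θ : ℝ, HasDerivAt (fun θ => eval (Real.cos θ) P)
      (eval (Real.cos θ) (derivative P) * (-Real.sin θ)) θ :=
    fun θ => (P.hasDerivAt (Real.cos θ)).comp θ (Real.hasDerivAt_cos θ)
  have hv : ∀ θ : ℝ, HasDerivAt (fun θ => eval (Real.cos θ) (derivative P))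
      (eval (Real.cos θ) (derivative (derivative P)) * (-Real.sin θ)) θ :=
    fun θ => ((derivative P).hasDerivAt (Real.cos θ)).comp θ (Real.hasDerivAt_cos θ)
  have hsinmul : ∀ θ : ℝ, HasDerivAt (fun θ : ℝ => Real.sin (((N:ℝ)+1) * θ))
      (Real.cos (((N:ℝ)+1) * θ) * (((N:ℝ)+1))) θ := by
    intro θ
    have hlin : HasDerivAt (fun θ : ℝ => ((N:ℝ)+1) * θ) ((N:ℝ)+1) θ := by
      simpa using (hasDerivAt_id θ).const_mul ((N:ℝ)+1)
    exact (Real.hasDerivAt_sin (((N:ℝ)+1) * θ)).comp θ hlin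
  set g1 : ℝ → ℝ := fun θ =>
    eval (Real.cos θ) (derivative P) * (-Real.sin θ) * Real.sin θ +
      eval (Real.cos θ) P * Real.cos θ with hg1
  have hG : ∀ θ : ℝ, HasDerivAt (fun θ => eval (Real.cos θ) P * Real.sin θ) (g1 θ) θ :=
    fun θ => (hu θ).mul (Real.hasDerivAt_sin θ)
  have hGfun : (fun θ => eval (Real.cos θ) P * Real.sin θ)
      = fun θ : ℝ => Real.sin (((N:ℝ)+1) * θ) := funext hcos
  have hg1eq : ∀ θ : ℝ, g1 θ = Real.cos (((N:ℝ)+1) * θ) * (((N:ℝ)+1)) := by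
    intro θ
    exact (hG θ).unique (hGfun ▸ hsinmul θ)
  -- second derivative
  have hd2 : HasDerivAt g1
      ( (eval (Real.cos a) (derivative (derivative P)) * (-Real.sin a) * (-Real.sin a)
          + eval (Real.cos a) (derivative P) * (-Real.cos a)) * Real.sin a
        + eval (Real.cos a) (derivative P) * (-Real.sin a) * Real.cos a
        + (eval (Real.cos a) (derivative P) * (-Real.sin a) * Real.cos a
            + eval (Real.cos a) P * (-Real.sin a)) ) a := by
    have t1 : HasDerivAt (fun θ => eval (Real.cos θ) (derivative P) * (-Real.sin θ))
        (eval (Real.cos a) (derivative (derivative P)) * (-Real.sin a) * (-Real.sin a)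
          + eval (Real.cos a) (derivative P) * (-Real.cos a)) a :=
      (hv a).mul (Real.hasDerivAt_sin a).neg
    have t2 := (t1.mul (Real.hasDerivAt_sin a)).add ((hu a).mul (Real.hasDerivAt_cos a))
    exact t2
  have hd2' : HasDerivAt g1
      (-Real.sin (((N:ℝ)+1)*a) * (((N:ℝ)+1)) * (((N:ℝ)+1))) a := by
    rw [funext hg1eq]
    have hlin : HasDerivAt (fun θ : ℝ => ((N:ℝ)+1) * θ) ((N:ℝ)+1) a := by
      simpa using (hasDerivAt_id a).const_mul ((N:ℝ)+1)
    exact ((Real.hasDerivAt_cos (((N:ℝ)+1) * a)).comp a hlin).mul_const (((N:ℝ)+1))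
  have E := hd2.unique hd2'
  have hu0 : eval (Real.cos a) P = 0 := by
    have h := hcos a
    rw [h0] at h
    exact (mul_eq_zero.mp h).resolve_right hs
  rw [hu0, h0] at E
  have key0 : Real.sin a * ((Real.sin a)^2 * eval (Real.cos a) (derivative (derivative P))
      - 3 * Real.cos a * eval (Real.cos a) (derivative P)) = 0 := by
    linear_combination E
  have key : (Real.sin a)^2 * eval (Real.cos a) (derivative (derivative P))
      = 3 * Real.cos a * eval (Real.cos a) (derivative P) := by
    have := (mul_eq_zero.mp key0).resolve_left hs
    linarith [this]
  rw [← Real.sin_sq]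
  exact key

lemma derivative_finset_prod (s : Finset ℕ) (f : ℕ → ℝ[X]) :
    derivative (∏ i ∈ s, f i) = ∑ i ∈ s, (∏ l ∈ s.erase i, f l) * derivative (f i) := by
  classical
  have h := Polynomial.derivative_prod (s := s.1) (f := f)
  rw [Finset.prod_eq_multiset_prod, h, Finset.sum_eq_multiset_sum]
  exact congrArg Multiset.sum (Multiset.map_congr rfl
    (fun i hi => by rw [Finset.prod_eq_multiset_prod, Finset.erase_val]))

lemma deriv_prod_eval (s : Finset ℕ) (y : ℕ → ℝ) {j : ℕ} (hj : j ∈ s) :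
    eval (y j) (derivative (∏ i ∈ s, (X - C (y i)))) = ∏ i ∈ s.erase j, (y j - y i) := by
  classical
  rw [derivative_finset_prod, eval_finset_sum]
  rw [Finset.sum_eq_single j]
  · simp [eval_prod]
  · intro i hi hij
    have hjmem : j ∈ s.erase i := Finset.mem_erase.mpr ⟨fun h => hij h.symm, hj⟩
    simp only [eval_mul, eval_prod]
    rw [Finset.prod_eq_zero hjmem (by simp)]
    ring
  · intro h; exact absurd hj h

lemma deriv2_prod_eval (s : Finset ℕ) (y : ℕ → ℝ) {j : ℕ} (hj : j ∈ s) :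
    eval (y j) (derivative (derivative (∏ i ∈ s, (X - C (y i))))) =
      2 * ∑ i ∈ s.erase j, ∏ l ∈ (s.erase j).erase i, (y j - y l) := by
  classical
  have hone : derivative (∏ i ∈ s, (X - C (y i)))
      = ∑ i ∈ s, ∏ l ∈ s.erase i, (X - C (y l)) := by
    rw [derivative_finset_prod]
    exact Finset.sum_congr rfl (fun i _ => by simp)
  rw [hone, derivative_sum]
  have hterm : ∀ i ∈ s, eval (y j) (derivative (∏ l ∈ s.erase i, (X - C (y l))))
      = ∑ c ∈ s.erase i, eval (y j) (∏ l ∈ (s.erase i).erase c, (X - C (y l))) := by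
    intro i _
    rw [derivative_finset_prod, eval_finset_sum]
    exact Finset.sum_congr rfl (fun c _ => by simp)
  rw [eval_finset_sum, Finset.sum_congr rfl hterm, ← Finset.add_sum_erase _ _ hj]
  have hjterm : ∑ c ∈ s.erase j, eval (y j) (∏ l ∈ (s.erase j).erase c, (X - C (y l)))
      = ∑ i ∈ s.erase j, ∏ l ∈ (s.erase j).erase i, (y j - y l) :=
    Finset.sum_congr rfl (fun c _ => by rw [eval_prod]; exact Finset.prod_congr rfl (by simp))
  have hother : ∀ i ∈ s.erase j,
      (∑ c ∈ s.erase i, eval (y j) (∏ l ∈ (s.erase i).erase c, (X - C (y l))))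
      = ∏ l ∈ (s.erase j).erase i, (y j - y l) := by
    intro i hi
    obtain ⟨hij, his⟩ := Finset.mem_erase.mp hi
    rw [Finset.sum_eq_single j]
    · rw [Finset.erase_right_comm, eval_prod]
      exact Finset.prod_congr rfl (by simp)
    · intro c hc hcj
      have hjmem : j ∈ (s.erase i).erase c :=
        Finset.mem_erase.mpr ⟨fun h => hcj h.symm, Finset.mem_erase.mpr ⟨Ne.symm hij, hj⟩⟩
      rw [eval_prod]
      exact Finset.prod_eq_zero hjmem (by simp)
    · intro h
      exact absurd (Finset.mem_erase.mpr ⟨Ne.symm hij, hj⟩) h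
  rw [hjterm, Finset.sum_congr rfl hother]
  ring

open Finset Real in
lemma cheb_key (N : ℕ) (hN : 1 ≤ N) {j : ℕ} (hj : j ∈ range N) :
    ∑ i ∈ (range N).erase j,
        (1 - (cos (((j:ℝ)+1) * π / (N+1)))^2) /
          (cos (((j:ℝ)+1) * π / (N+1)) - cos (((i:ℝ)+1) * π / (N+1)))
      = 3/2 * cos (((j:ℝ)+1) * π / (N+1)) := by
  set x : ℕ → ℝ := fun i => cos (((i:ℝ)+1) * π / (N+1)) with hx
  have hmem : ∀ i ∈ range N, ((i:ℝ)+1) * π / (N+1) ∈ Set.Ioo 0 π := by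
    intro i hi
    simp only [mem_range] at hi
    constructor
    · positivity
    · rw [div_lt_iff₀ (by positivity)]
      have : ((i:ℝ)+1) < (N:ℝ)+1 := by exact_mod_cast by omega
      nlinarith [Real.pi_pos]
  have hinj : ∀ i ∈ range N, ∀ k ∈ range N, x i = x k → i = k := by
    intro i hi k hk hik
    have hmi := hmem i hi
    have hmk := hmem k hk
    have heq : ((i:ℝ)+1) * π / (N+1) = ((k:ℝ)+1) * π / (N+1) :=
      Real.injOn_cos (Set.mem_Icc.mpr ⟨le_of_lt hmi.1, le_of_lt hmi.2⟩)
        (Set.mem_Icc.mpr ⟨le_of_lt hmk.1, le_of_lt hmk.2⟩) hik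
    have hN1 : (0:ℝ) < (N:ℝ)+1 := by positivity
    have h3 : ((i:ℝ)+1) * π = ((k:ℝ)+1) * π := by
      have h4 := congrArg (· * ((N:ℝ)+1)) heq
      simpa [div_mul_cancel₀, hN1.ne'] using h4
    have h4 : (i:ℝ) = k := by
      have := mul_right_cancel₀ Real.pi_ne_zero h3
      linarith
    exact_mod_cast h4
  -- ODE at the root
  set a : ℝ := ((j:ℝ)+1) * π / (N+1) with ha
  have hma := hmem j hj
  have hs : Real.sin a ≠ 0 := ne_of_gt (Real.sin_pos_of_pos_of_lt_pi hma.1 hma.2)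
  have h0 : Real.sin (((N:ℝ)+1) * a) = 0 := by
    have h1 : ((N:ℝ) + 1) * a = ((j:ℝ)+1) * π := by
      rw [ha]; field_simp
    rw [h1, show ((j:ℝ)+1) * π = (j+1 : ℤ) * π by push_cast; ring, Real.sin_int_mul_pi]
  have hode := U_ode_at_root N a hs h0
  -- rewrite via the factorization
  have hfac := U_factor N hN
  set q : ℝ[X] := ∏ i ∈ range N, (X - C (x i)) with hq
  have hd1 : eval (x j) (derivative (U ℝ N)) = 2^N * ∏ i ∈ (range N).erase j, (x j - x i) := by
    rw [hfac, derivative_C_mul, eval_C_mul, deriv_prod_eval _ _ hj]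
  have hd2 : eval (x j) (derivative (derivative (U ℝ N)))
      = 2^N * (2 * ∑ i ∈ (range N).erase j, ∏ l ∈ ((range N).erase j).erase i, (x j - x l)) := by
    rw [hfac, derivative_C_mul, derivative_C_mul, eval_C_mul, deriv2_prod_eval _ _ hj]
  rw [hd1, hd2] at hode
  have h2N : (2:ℝ)^N ≠ 0 := by positivity
  set P : ℝ := ∏ i ∈ (range N).erase j, (x j - x i) with hP
  set Q : ℕ → ℝ := fun i => ∏ l ∈ ((range N).erase j).erase i, (x j - x l) with hQ
  have hrel : (1 - Real.cos a ^ 2) * (2 * ∑ i ∈ (range N).erase j, Q i)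
      = 3 * Real.cos a * P := by
    apply mul_left_cancel₀ h2N
    linear_combination hode
  have hne : ∀ i ∈ (range N).erase j, x j - x i ≠ 0 := by
    intro i hi
    obtain ⟨hij, his⟩ := Finset.mem_erase.mp hi
    exact sub_ne_zero.mpr fun h => hij (hinj i his j hj h.symm)
  have hPne : P ≠ 0 := Finset.prod_ne_zero_iff.mpr hne
  have hstep : ∀ i ∈ (range N).erase j,
      (1 - Real.cos a ^ 2) / (Real.cos a - Real.cos (((i:ℝ)+1) * π / (N+1)))
        = (1 - Real.cos a ^ 2) * Q i / P := by
    intro i hi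
    show (1 - Real.cos a ^ 2) / (x j - x i) = (1 - Real.cos a ^ 2) * Q i / P
    rw [div_eq_div_iff (hne i hi) hPne]
    have hfact : (x j - x i) * Q i = P := Finset.mul_prod_erase ((range N).erase j) (fun l => x j - x l) hi
    rw [← hfact]
    ring
  rw [Finset.sum_congr rfl hstep, ← Finset.sum_div, ← Finset.mul_sum]
  have : (1 - Real.cos a ^ 2) * ∑ i ∈ (range N).erase j, Q i = 3/2 * Real.cos a * P := by
    linear_combination hrel / 2
  rw [this, mul_div_assoc, div_self hPne, mul_one]


open Finset Real in
lemma cos_nodes_inj (N : ℕ) {i j : ℕ} (hi : i ∈ range N) (hj : j ∈ range N)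
    (h : Real.cos (((i:ℝ)+1) * π / ((N:ℝ)+1)) = Real.cos (((j:ℝ)+1) * π / ((N:ℝ)+1))) :
    i = j := by
  have hmem : ∀ k ∈ range N, ((k:ℝ)+1) * π / ((N:ℝ)+1) ∈ Set.Ioo 0 π := by
    intro k hk
    simp only [mem_range] at hk
    constructor
    · positivity
    · rw [div_lt_iff₀ (by positivity)]
      have : ((k:ℝ)+1) < (N:ℝ)+1 := by exact_mod_cast by omega
      nlinarith [Real.pi_pos]
  have hmi := hmem i hi
  have hmj := hmem j hj
  have heq : ((i:ℝ)+1) * π / ((N:ℝ)+1) = ((j:ℝ)+1) * π / ((N:ℝ)+1) :=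
    Real.injOn_cos (Set.mem_Icc.mpr ⟨le_of_lt hmi.1, le_of_lt hmi.2⟩)
      (Set.mem_Icc.mpr ⟨le_of_lt hmj.1, le_of_lt hmj.2⟩) h
  have hN1 : (0:ℝ) < (N:ℝ)+1 := by positivity
  have h3 : ((i:ℝ)+1) * π = ((j:ℝ)+1) * π := by
    have h4 := congrArg (· * ((N:ℝ)+1)) heq
    simpa [div_mul_cancel₀, hN1.ne'] using h4
  have h4 : (i:ℝ) = j := by
    have := mul_right_cancel₀ Real.pi_ne_zero h3
    linarith
  exact_mod_cast h4

lemma sum_erase_swap (s : Finset ℕ) (F : ℕ → ℕ → ℝ) :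
    ∑ j ∈ s, ∑ i ∈ s.erase j, F j i = ∑ j ∈ s, ∑ i ∈ s.erase j, F i j := by
  have h : ∀ (G : ℕ → ℕ → ℝ), ∑ j ∈ s, ∑ i ∈ s.erase j, G j i
      = ∑ j ∈ s, ∑ i ∈ s, if i = j then 0 else G j i := by
    intro G
    refine Finset.sum_congr rfl fun j hj => ?_
    rw [Finset.sum_ite, Finset.sum_const_zero, zero_add]
    apply Finset.sum_congr _ (fun _ _ => rfl)
    rw [Finset.filter_ne']
  rw [h F, h fun a b => F b a, Finset.sum_comm]
  refine Finset.sum_congr rfl fun j _ => Finset.sum_congr rfl fun i _ => ?_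
  rcases eq_or_ne i j with rfl | hne
  · simp
  · simp [hne, hne.symm]

lemma double_sum_pow (s : Finset ℕ) (x : ℕ → ℝ) (a b : ℕ) :
    ∑ j ∈ s, ∑ i ∈ s.erase j, x j ^ a * x i ^ b
      = (∑ k ∈ s, x k ^ a) * (∑ k ∈ s, x k ^ b) - ∑ k ∈ s, x k ^ (a + b) := by
  have h1 : ∀ j ∈ s, ∑ i ∈ s.erase j, x j ^ a * x i ^ b
      = x j ^ a * ((∑ k ∈ s, x k ^ b) - x j ^ b) := by
    intro j hj
    rw [← Finset.mul_sum, Finset.sum_erase_eq_sub hj]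
  rw [Finset.sum_congr rfl h1]
  rw [Finset.sum_congr rfl (fun j (_ : j ∈ s) => mul_sub (x j ^ a) _ _),
    Finset.sum_sub_distrib, ← Finset.sum_mul]
  congr 1
  exact Finset.sum_congr rfl fun j _ => by rw [← pow_add]

end Aux

open Finset Real

/-- **Case's equation for the moments of Chebyshev `U` zeros.** For every `N ≥ 1`
and `r ≥ 1`, with `m_r = m_r^{(U)}(N) = (1/N) Σ_{k=1}^N (cos(kπ/(N+1)))^r`:
`(2N − (r−1)) m_{r+1} = −r·m_{r−1} + N Σ_{s=0}^{r−1} (m_{r−1−s} m_s − m_{r−s} m_{s+1})`. -/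
theorem chebyshevU_case_equation (N : ℕ) (hN : 1 ≤ N)
    (m : ℕ → ℝ)
    (hm : ∀ r, m r = (1 / (N : ℝ)) *
        ∑ k ∈ Finset.range N, (Real.cos (((k : ℝ) + 1) * Real.pi / (N + 1))) ^ r)
    (r : ℕ) (hr : 1 ≤ r) :
    (2 * (N : ℝ) - ((r : ℝ) - 1)) * m (r + 1) =
      -(r : ℝ) * m (r - 1) +
        (N : ℝ) * ∑ s ∈ Finset.range r, (m (r - 1 - s) * m s - m (r - s) * m (s + 1)) := by
  have hNne : (N:ℝ) ≠ 0 := Nat.cast_ne_zero.mpr (by omega)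
  set c : ℕ → ℝ := fun k => Real.cos (((k:ℝ)+1) * π / ((N:ℝ)+1)) with hc
  set S : ℕ → ℝ := fun a => ∑ k ∈ range N, c k ^ a with hSdef
  have hSa : ∀ a, S a = ∑ k ∈ range N, c k ^ a := fun a => rfl
  have hSm : ∀ a, S a = N * m a := by
    intro a
    rw [hm a, ← mul_assoc, mul_one_div, div_self hNne, one_mul]
  -- the weighted electrostatic sum
  have hT : ∑ j ∈ range N, ∑ i ∈ (range N).erase j, (c j ^ r * (1 - c j ^ 2)) / (c j - c i)
      = 3/2 * S (r+1) := by
    have h1 : ∀ j ∈ range N, ∑ i ∈ (range N).erase j, (c j ^ r * (1 - c j ^ 2)) / (c j - c i)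
        = c j ^ r * (3/2 * c j) := by
      intro j hj
      rw [Finset.sum_congr rfl (fun i (_ : i ∈ (range N).erase j) =>
        mul_div_assoc (c j ^ r) (1 - c j ^ 2) (c j - c i)), ← Finset.mul_sum,
        cheb_key N hN hj]
    rw [Finset.sum_congr rfl h1, hSa, Finset.mul_sum]
    exact Finset.sum_congr rfl fun j _ => by rw [pow_succ]; ring
  -- symmetrized double sum
  have hswap : ∑ j ∈ range N, ∑ i ∈ (range N).erase j, (c j ^ r * (1 - c j ^ 2)) / (c j - c i)
      = ∑ j ∈ range N, ∑ i ∈ (range N).erase j, (-(c i ^ r * (1 - c i ^ 2))) / (c j - c i) := by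
    rw [sum_erase_swap (range N) (fun j i => (c j ^ r * (1 - c j ^ 2)) / (c j - c i))]
    refine Finset.sum_congr rfl fun j _ => Finset.sum_congr rfl fun i _ => ?_
    rw [neg_div, ← div_neg, neg_sub]
  have h2T : ∑ j ∈ range N, ∑ i ∈ (range N).erase j,
        ((c j ^ r * (1 - c j ^ 2)) - (c i ^ r * (1 - c i ^ 2))) / (c j - c i)
      = 2 * (3/2 * S (r+1)) := by
    rw [← hT, two_mul]
    nth_rewrite 2 [hswap]
    rw [← Finset.sum_add_distrib]
    refine Finset.sum_congr rfl fun j _ => ?_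
    rw [← Finset.sum_add_distrib]
    refine Finset.sum_congr rfl fun i _ => ?_
    rw [← add_div, ← sub_eq_add_neg]
  -- divided differences
  have hdd : ∑ j ∈ range N, ∑ i ∈ (range N).erase j,
        ((c j ^ r * (1 - c j ^ 2)) - (c i ^ r * (1 - c i ^ 2))) / (c j - c i)
      = ∑ j ∈ range N, ∑ i ∈ (range N).erase j,
          ((∑ t ∈ range r, c j ^ t * c i ^ (r-1-t))
            - ∑ t ∈ range (r+2), c j ^ t * c i ^ (r+1-t)) := by
    refine Finset.sum_congr rfl fun j hj => Finset.sum_congr rfl fun i hi => ?_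
    obtain ⟨hij, his⟩ := Finset.mem_erase.mp hi
    have hd : c j - c i ≠ 0 := sub_ne_zero.mpr fun h => hij (cos_nodes_inj N his hj h.symm)
    rw [div_eq_iff hd]
    have g1 := geom_sum₂_mul (c j) (c i) r
    have g2 := geom_sum₂_mul (c j) (c i) (r+2)
    have e : r + 2 - 1 = r + 1 := rfl
    rw [e] at g2
    linear_combination g2 - g1
  -- reorder triple sums
  have hsplit : ∀ (n : ℕ),
      ∑ j ∈ range N, ∑ i ∈ (range N).erase j, ∑ t ∈ range n, c j ^ t * c i ^ (n-1-t)
        = ∑ t ∈ range n, (S t * S (n-1-t) - S (n-1)) := by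
    intro n
    calc ∑ j ∈ range N, ∑ i ∈ (range N).erase j, ∑ t ∈ range n, c j ^ t * c i ^ (n-1-t)
        = ∑ j ∈ range N, ∑ t ∈ range n, ∑ i ∈ (range N).erase j, c j ^ t * c i ^ (n-1-t) :=
          Finset.sum_congr rfl fun j _ => Finset.sum_comm
      _ = ∑ t ∈ range n, ∑ j ∈ range N, ∑ i ∈ (range N).erase j, c j ^ t * c i ^ (n-1-t) :=
          Finset.sum_comm
      _ = ∑ t ∈ range n, (S t * S (n-1-t) - S (n-1)) := by
          refine Finset.sum_congr rfl fun t ht => ?_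
          have e : t + (n-1-t) = n-1 := by
            simp only [Finset.mem_range] at ht; omega
          rw [double_sum_pow, e, ← hSa, ← hSa, ← hSa]
  have hs1 := hsplit r
  have hs2 : ∑ j ∈ range N, ∑ i ∈ (range N).erase j, ∑ t ∈ range (r+2), c j ^ t * c i ^ (r+1-t)
      = ∑ t ∈ range (r+2), (S t * S (r+1-t) - S (r+1)) := hsplit (r+2)
  have hS0 : S 0 = N := by rw [hSa]; simp
  have hsum2 : ∑ t ∈ range (r+2), (S t * S (r+1-t) - S (r+1))
      = (∑ t ∈ range r, (S (t+1) * S (r-t) - S (r+1))) + 2*((N:ℝ) * S (r+1) - S (r+1)) := by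
    rw [Finset.sum_range_succ, Finset.sum_range_succ']
    have e1 : r + 1 - (r+1) = 0 := by omega
    have e2 : r + 1 - 0 = r+1 := rfl
    rw [e1, e2, hS0]
    have h3 : ∀ t ∈ range r, S (t+1) * S (r+1-(t+1)) - S (r+1)
        = S (t+1) * S (r-t) - S (r+1) := by
      intro t ht
      have e3 : r+1-(t+1) = r - t := by omega
      rw [e3]
    rw [Finset.sum_congr rfl h3]
    ring
  -- split the sums of differences
  have hXY : ∑ j ∈ range N, ∑ i ∈ (range N).erase j,
        ((∑ t ∈ range r, c j ^ t * c i ^ (r-1-t))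
          - ∑ t ∈ range (r+2), c j ^ t * c i ^ (r+1-t))
      = (∑ j ∈ range N, ∑ i ∈ (range N).erase j, ∑ t ∈ range r, c j ^ t * c i ^ (r-1-t))
        - ∑ j ∈ range N, ∑ i ∈ (range N).erase j, ∑ t ∈ range (r+2), c j ^ t * c i ^ (r+1-t) := by
    rw [Finset.sum_congr rfl fun j (_ : j ∈ range N) => Finset.sum_sub_distrib _ _,
      Finset.sum_sub_distrib]
  have hconst : ∀ (n : ℕ) (f : ℕ → ℝ) (z : ℝ),
      ∑ t ∈ range n, (f t - z) = (∑ t ∈ range n, f t) - n * z := by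
    intro n f z
    rw [Finset.sum_sub_distrib, Finset.sum_const, Finset.card_range, nsmul_eq_mul]
  have hE : 3 * S (r+1) = (∑ t ∈ range r, S t * S (r-1-t)) - r * S (r-1)
      - ((∑ t ∈ range r, S (t+1) * S (r-t)) - r * S (r+1)
          + 2*((N:ℝ) * S (r+1) - S (r+1))) := by
    have h5 := hconst r (fun t => S t * S (r-1-t)) (S (r-1))
    have h6 := hconst r (fun t => S (t+1) * S (r-t)) (S (r+1))
    linear_combination -h2T + hdd + hXY + hs1 + h5 - hs2 - hsum2 - h6
  -- convert to moments
  have e1 : (∑ t ∈ range r, S t * S (r-1-t))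
      = (N:ℝ)^2 * ∑ s ∈ range r, m (r-1-s) * m s := by
    rw [Finset.mul_sum]
    refine Finset.sum_congr rfl fun t _ => ?_
    rw [hSm t, hSm (r-1-t)]; ring
  have e2 : (∑ t ∈ range r, S (t+1) * S (r-t))
      = (N:ℝ)^2 * ∑ s ∈ range r, m (r-s) * m (s+1) := by
    rw [Finset.mul_sum]
    refine Finset.sum_congr rfl fun t _ => ?_
    rw [hSm (t+1), hSm (r-t)]; ring
  have hgs : ∑ s ∈ range r, (m (r-1-s) * m s - m (r-s) * m (s+1))
      = (∑ s ∈ range r, m (r-1-s) * m s) - ∑ s ∈ range r, m (r-s) * m (s+1) :=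
    Finset.sum_sub_distrib _ _
  rw [hgs]
  apply mul_left_cancel₀ hNne
  linear_combination hE - (2*(N:ℝ) - ((r:ℝ)-1)) * hSm (r+1) - (r:ℝ) * hSm (r-1) + e1 - e2
end

section
/- Case's equation for the scaled moments of Hermite zeros (Table 4, probabilists' normalization): for every N ≥ 1 and every r ≥ 0, q_{r+2}(N) = −((r+1)/N) · q_r(N) + Σ_{s=0}^r q_{r−s}(N) · q_s(N). -/
open Finset Polynomial

section HermiteAux

/-- Derivative of the probabilists' Hermite polynomial. -/
lemma hermiteAux_derivative (n : ℕ) :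
    derivative (hermite n) = n * hermite (n - 1) := by
  induction n with
  | zero => simp [hermite_zero]
  | succ n ih =>
    cases n with
    | zero => simp [hermite_one, hermite_zero, hermite_succ]
    | succ m =>
      rw [hermite_succ (m+1), derivative_sub, derivative_mul, derivative_X, ih]
      simp only [Nat.add_sub_cancel]
      rw [derivative_mul, derivative_natCast, hermite_succ m]
      push_cast
      ring

/-- The complex Hermite polynomial. -/
noncomputable def hermiteC (n : ℕ) : ℂ[X] := (hermite n).map (Int.castRingHom ℂ)

lemma hermiteAux_unit (n : ℕ) : IsUnit ((n : ℂ[X]) + 1) := by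
  have h2 : ((n:ℂ) + 1) ≠ 0 := by
    have := (Nat.cast_ne_zero (R := ℂ)).2 (Nat.succ_ne_zero n)
    push_cast at this
    exact this
  have h : ((n:ℂ[X]) + 1) = C ((n:ℂ) + 1) := by simp
  rw [h]
  exact Polynomial.isUnit_C.2 (isUnit_iff_ne_zero.2 h2)

lemma hermiteC_deriv (n : ℕ) : derivative (hermiteC (n + 1)) = ((n:ℂ[X]) + 1) * hermiteC n := by
  unfold hermiteC
  rw [derivative_map, hermiteAux_derivative, Nat.add_sub_cancel]
  simp [Polynomial.map_mul]

lemma hermiteC_succ (n : ℕ) : hermiteC (n + 1) = X * hermiteC n - derivative (hermiteC n) := by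
  unfold hermiteC
  rw [hermite_succ, derivative_map]
  simp [Polynomial.map_mul]

lemma hermiteC_rec (n : ℕ) :
    hermiteC (n + 2) = X * hermiteC (n + 1) - ((n : ℂ[X]) + 1) * hermiteC n := by
  rw [hermiteC_succ (n+1), hermiteC_deriv]

lemma hermiteC_coprime (n : ℕ) : IsCoprime (hermiteC n) (hermiteC (n + 1)) := by
  induction n with
  | zero =>
    have : hermiteC 0 = 1 := by simp [hermiteC, hermite_zero]
    rw [this]
    exact isCoprime_one_left
  | succ n ih =>
    rw [hermiteC_rec]
    have h1 : IsCoprime (hermiteC (n+1)) (((n:ℂ[X]) + 1) * hermiteC n) :=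
      (isCoprime_mul_unit_left_right (hermiteAux_unit n) _ _).2 ih.symm
    have := (h1.neg_right).add_mul_left_right X
    convert this using 1
    · rfl
    · ring

lemma hermiteC_sep (n : ℕ) (hn : 1 ≤ n) : (hermiteC n).Separable := by
  obtain ⟨m, rfl⟩ : ∃ m, n = m + 1 := ⟨n - 1, (Nat.succ_pred_eq_of_pos hn).symm⟩
  rw [Polynomial.Separable, hermiteC_deriv]
  exact (isCoprime_mul_unit_left_right (hermiteAux_unit m) _ _).2 (hermiteC_coprime m).symm

lemma hermiteC_ODE (n : ℕ) : derivative (derivative (hermiteC n)) =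
    X * derivative (hermiteC n) - (n : ℂ[X]) * hermiteC n := by
  have h1 : derivative (hermiteC n) = X * hermiteC n - hermiteC (n + 1) := by
    rw [hermiteC_succ]; ring
  have h2 : derivative (derivative (hermiteC n)) =
      hermiteC n + X * derivative (hermiteC n) - derivative (hermiteC (n + 1)) := by
    conv_lhs => rw [h1]
    rw [derivative_sub, derivative_mul, derivative_X]
    ring
  rw [h2, hermiteC_deriv]
  ring

end HermiteAux

section FinsetAux

lemma hermiteAux_eval_derivative_prod (t : Finset ℂ) (a : ℂ) :
    eval a (derivative (∏ b ∈ t, (X - C b))) = ∑ b ∈ t, ∏ c ∈ t.erase b, (a - c) := by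
  induction t using Finset.induction_on with
  | empty => simp
  | @insert x t hx ih =>
    rw [Finset.prod_insert hx, derivative_mul, Finset.sum_insert hx]
    have h1 : (insert x t).erase x = t := Finset.erase_insert hx
    rw [eval_add, eval_mul, eval_mul, ih]
    simp only [derivative_sub, derivative_X, derivative_C, sub_zero, eval_one, one_mul,
      eval_sub, eval_X, eval_C, eval_prod, h1]
    rw [Finset.mul_sum]
    congr 1
    apply Finset.sum_congr rfl
    intro b hb
    have hbx : x ≠ b := fun h => hx (h ▸ hb)
    rw [Finset.erase_insert_of_ne hbx, Finset.prod_insert (fun h => hx (Finset.mem_of_mem_erase h))]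

lemma hermiteAux_half_sum (s : Finset ℂ) (a : ℂ) (ha : a ∈ s)
    (hODE : eval a (derivative (derivative (∏ b ∈ s, (X - C b)))) =
      a * eval a (derivative (∏ b ∈ s, (X - C b)))) :
    2 * ∑ b ∈ s.erase a, (a - b)⁻¹ = a := by
  set t := s.erase a with ht
  set Q : ℂ[X] := ∏ b ∈ t, (X - C b) with hQ
  have hta : ∀ b ∈ t, a - b ≠ 0 := by
    intro b hb
    exact sub_ne_zero_of_ne (Ne.symm (Finset.ne_of_mem_erase hb))
  have hQa : eval a Q ≠ 0 := by
    rw [hQ, eval_prod]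
    simp only [eval_sub, eval_X, eval_C]
    exact Finset.prod_ne_zero_iff.2 hta
  have hP : (∏ b ∈ s, (X - C b)) = (X - C a) * Q := (Finset.mul_prod_erase s _ ha).symm
  have hP1 : eval a (derivative (∏ b ∈ s, (X - C b))) = eval a Q := by
    rw [hP, derivative_mul]; simp
  have hP2 : eval a (derivative (derivative (∏ b ∈ s, (X - C b)))) =
      2 * eval a (derivative Q) := by
    rw [hP, derivative_mul, derivative_add, derivative_mul]
    simp
    ring
  rw [hP1, hP2] at hODE
  have hsum : ∑ b ∈ t, (a - b)⁻¹ = eval a (derivative Q) / eval a Q := by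
    rw [hQ, hermiteAux_eval_derivative_prod, eval_prod, Finset.sum_div]
    simp only [eval_sub, eval_X, eval_C]
    apply Finset.sum_congr rfl
    intro b hb
    have hab := hta b hb
    have h2 : (∏ c ∈ t.erase b, (a - c)) ≠ 0 :=
      Finset.prod_ne_zero_iff.2 (fun c hc => hta c (Finset.mem_of_mem_erase hc))
    rw [← Finset.mul_prod_erase t (fun c => a - c) hb, eq_div_iff (mul_ne_zero hab h2),
      ← mul_assoc, inv_mul_cancel₀ hab, one_mul]
  rw [hsum, mul_div_assoc', eq_comm, eq_div_iff hQa]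
  linear_combination -hODE

lemma hermiteAux_geom (r : ℕ) (a b : ℂ) :
    (a ^ (r+1) - b ^ (r+1)) * (a - b)⁻¹ =
      (∑ i ∈ range (r+1), a ^ i * b ^ (r - i)) - (if a = b then (r : ℂ) + 1 else 0) * a ^ r := by
  by_cases hab : a = b
  · subst hab
    rw [if_pos rfl]
    simp only [sub_self, inv_zero, mul_zero, zero_mul]
    have : ∀ i ∈ range (r+1), a ^ i * a ^ (r - i) = a ^ r := by
      intro i hi
      rw [← pow_add, Nat.add_sub_cancel' (Nat.lt_succ_iff.1 (Finset.mem_range.1 hi))]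
    rw [Finset.sum_congr rfl this, Finset.sum_const, Finset.card_range]
    ring
  · have h := geom_sum₂_mul a b (r+1)
    simp only [Nat.add_sub_cancel] at h
    rw [if_neg hab, zero_mul, sub_zero, ← h, mul_assoc,
      mul_inv_cancel₀ (sub_ne_zero.2 hab), mul_one]

lemma hermiteAux_p_identity (s : Finset ℂ) (r : ℕ)
    (H : ∀ a ∈ s, 2 * ∑ b ∈ s.erase a, (a - b)⁻¹ = a) :
    ∑ a ∈ s, a ^ (r + 2) =
      (∑ i ∈ range (r + 1), (∑ a ∈ s, a ^ i) * (∑ a ∈ s, a ^ (r - i)))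
        - ((r : ℂ) + 1) * ∑ a ∈ s, a ^ r := by
  have step1 : ∀ a ∈ s, a ^ (r+2) = ∑ b ∈ s, 2 * a ^ (r+1) * (a - b)⁻¹ := by
    intro a ha
    calc a ^ (r+2) = a ^ (r+1) * (2 * ∑ b ∈ s.erase a, (a - b)⁻¹) := by rw [H a ha]; ring
    _ = ∑ b ∈ s.erase a, 2 * a ^ (r+1) * (a - b)⁻¹ := by
        simp only [Finset.mul_sum]
        exact Finset.sum_congr rfl (fun b _ => by ring)
    _ = ∑ b ∈ s, 2 * a ^ (r+1) * (a - b)⁻¹ := by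
        rw [← Finset.add_sum_erase s _ ha]; simp
  have hD : ∑ a ∈ s, a ^ (r+2) = ∑ a ∈ s, ∑ b ∈ s, 2 * a ^ (r+1) * (a - b)⁻¹ :=
    Finset.sum_congr rfl step1
  have hswap : ∑ a ∈ s, ∑ b ∈ s, 2 * a ^ (r+1) * (a - b)⁻¹
      = ∑ a ∈ s, ∑ b ∈ s, 2 * b ^ (r+1) * (b - a)⁻¹ := Finset.sum_comm
  have hpair : ∀ a b : ℂ, 2 * a ^ (r+1) * (a - b)⁻¹ + 2 * b ^ (r+1) * (b - a)⁻¹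
      = (a ^ (r+1) - b ^ (r+1)) * (a - b)⁻¹ * 2 := by
    intro a b
    by_cases hab : a = b
    · subst hab; simp
    · rw [show b - a = -(a - b) by ring, inv_neg]; ring
  have h2D : (∑ a ∈ s, a ^ (r+2)) * 2
      = ∑ a ∈ s, ∑ b ∈ s, (a ^ (r+1) - b ^ (r+1)) * (a - b)⁻¹ * 2 := by
    calc (∑ a ∈ s, a ^ (r+2)) * 2
        = (∑ a ∈ s, ∑ b ∈ s, 2 * a ^ (r+1) * (a - b)⁻¹)
          + ∑ a ∈ s, ∑ b ∈ s, 2 * b ^ (r+1) * (b - a)⁻¹ := by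
          rw [← hswap, ← hD]; ring
    _ = ∑ a ∈ s, ∑ b ∈ s, (2 * a ^ (r+1) * (a - b)⁻¹ + 2 * b ^ (r+1) * (b - a)⁻¹) := by
          rw [← Finset.sum_add_distrib]
          exact Finset.sum_congr rfl (fun a _ => (Finset.sum_add_distrib).symm)
    _ = ∑ a ∈ s, ∑ b ∈ s, (a ^ (r+1) - b ^ (r+1)) * (a - b)⁻¹ * 2 :=
          Finset.sum_congr rfl (fun a _ => Finset.sum_congr rfl (fun b _ => hpair a b))
  have hT : ∑ a ∈ s, ∑ b ∈ s, (a ^ (r+1) - b ^ (r+1)) * (a - b)⁻¹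
      = (∑ i ∈ range (r + 1), (∑ a ∈ s, a ^ i) * (∑ a ∈ s, a ^ (r - i)))
        - ((r : ℂ) + 1) * ∑ a ∈ s, a ^ r := by
    have key : ∀ a ∈ s, ∑ b ∈ s, (a ^ (r+1) - b ^ (r+1)) * (a - b)⁻¹
        = (∑ i ∈ range (r+1), a ^ i * ∑ b ∈ s, b ^ (r - i)) - ((r : ℂ) + 1) * a ^ r := by
      intro a ha
      rw [Finset.sum_congr rfl (fun b _ => hermiteAux_geom r a b), Finset.sum_sub_distrib]
      congr 1
      · rw [Finset.sum_comm]
        exact Finset.sum_congr rfl (fun i _ => (Finset.mul_sum _ _ _).symm)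
      · rw [← Finset.sum_mul]
        congr 1
        simp [Finset.sum_ite_eq, ha]
    rw [Finset.sum_congr rfl key, Finset.sum_sub_distrib]
    congr 1
    · rw [Finset.sum_comm]
      exact Finset.sum_congr rfl (fun i _ => (Finset.sum_mul _ _ _).symm)
    · rw [Finset.mul_sum]
  have h3 : (∑ a ∈ s, a ^ (r+2)) * 2
      = (∑ a ∈ s, ∑ b ∈ s, (a ^ (r+1) - b ^ (r+1)) * (a - b)⁻¹) * 2 := by
    rw [h2D, Finset.sum_mul]
    exact Finset.sum_congr rfl (fun a _ => (Finset.sum_mul _ _ _).symm)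
  have h4 := mul_right_cancel₀ (two_ne_zero) h3
  rw [h4, hT]

lemma hermiteAux_msum (m : Multiset ℂ) (hm : m.Nodup) (f : ℂ → ℂ) :
    (m.map f).sum = ∑ a ∈ m.toFinset, f a := by
  rw [Finset.sum_eq_multiset_sum, Multiset.toFinset_val, Multiset.dedup_eq_self.2 hm]

lemma hermiteAux_mprod (m : Multiset ℂ) (hm : m.Nodup) (f : ℂ → ℂ[X]) :
    (m.map f).prod = ∏ a ∈ m.toFinset, f a := by
  rw [Finset.prod_eq_multiset_prod, Multiset.toFinset_val, Multiset.dedup_eq_self.2 hm]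

lemma hermiteAux_c_two (N : ℕ) (hN : 1 ≤ N) (r : ℕ) :
    ((N:ℝ) ^ (-(1 + (((r:ℕ)+2:ℕ):ℝ)/2)) : ℝ) = (N:ℝ) ^ (-(1 + (r:ℝ)/2)) / (N:ℝ) := by
  have hNpos : (0:ℝ) < N := by exact_mod_cast hN
  rw [show -(1 + (((r:ℕ)+2:ℕ):ℝ)/2) = -(1 + (r:ℝ)/2) + (-1) by push_cast; ring,
    Real.rpow_add hNpos, Real.rpow_neg_one]
  ring

lemma hermiteAux_c_mul (N : ℕ) (hN : 1 ≤ N) (r s : ℕ) (hs : s ≤ r) :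
    ((N:ℝ) ^ (-(1 + ((r - s : ℕ):ℝ)/2)) : ℝ) * (N:ℝ) ^ (-(1 + (s:ℝ)/2))
      = (N:ℝ) ^ (-(1 + (((r:ℕ)+2:ℕ):ℝ)/2)) := by
  have hNpos : (0:ℝ) < N := by exact_mod_cast hN
  rw [← Real.rpow_add hNpos]
  congr 1
  rw [Nat.cast_sub hs]
  push_cast
  ring

end FinsetAux

/-- **Case's equation for the scaled moments of Hermite zeros** (probabilists'
normalization).  Let `h_1, …, h_N` be the complex roots (with multiplicity) of the
probabilists' Hermite polynomial `He_N`, and let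
`q_r(N) := N^{−(1 + r/2)} Σ_{i=1}^N h_i^r`.  Then for every `N ≥ 1` and `r ≥ 0`,
`q_{r+2}(N) = −((r+1)/N) q_r(N) + Σ_{s=0}^r q_{r−s}(N) q_s(N)`. -/
theorem hermite_case_equation (N : ℕ) (hN : 1 ≤ N)
    (q : ℕ → ℂ)
    (hq : ∀ r, q r =
      (((N : ℝ) ^ (-(1 + (r : ℝ) / 2)) : ℝ) : ℂ) *
        ((((Polynomial.hermite N).map (Int.castRingHom ℂ)).roots.map (fun h => h ^ r)).sum)) :
    ∀ r : ℕ, q (r + 2) =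
      -(((r : ℂ) + 1) / N) * q r + ∑ s ∈ Finset.range (r + 1), q (r - s) * q s := by
  intro r
  have hP : (Polynomial.hermite N).map (Int.castRingHom ℂ) = hermiteC N := rfl
  set P := hermiteC N with hPdef
  have hmonic : P.Monic := (hermite_monic N).map _
  have hnodup : P.roots.Nodup := nodup_roots (hermiteC_sep N hN)
  set sfin := P.roots.toFinset with hsfin
  have hsplit : P = ∏ a ∈ sfin, (X - C a) := by
    have h := (IsAlgClosed.splits P).eq_prod_roots_of_monic hmonic
    rwa [hermiteAux_mprod _ hnodup] at h
  -- the half-sum identity at every root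
  have H : ∀ a ∈ sfin, 2 * ∑ b ∈ sfin.erase a, (a - b)⁻¹ = a := by
    intro a ha
    apply hermiteAux_half_sum sfin a ha
    rw [← hsplit, hermiteC_ODE]
    have hroot : eval a P = 0 :=
      isRoot_of_mem_roots (Multiset.mem_toFinset.1 ha)
    simp [eval_mul, hroot, ← hPdef]
  have hp := hermiteAux_p_identity sfin r H
  -- translate multiset sums to finset sums
  have hms : ∀ j : ℕ, ((P.roots).map (fun h => h ^ j)).sum = ∑ a ∈ sfin, a ^ j :=
    fun j => hermiteAux_msum _ hnodup _
  -- rewrite everything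
  have hq' : ∀ j : ℕ, q j =
      (((N : ℝ) ^ (-(1 + (j : ℝ) / 2)) : ℝ) : ℂ) * ∑ a ∈ sfin, a ^ j := by
    intro j
    rw [hq j, hP, hms j]
  rw [hq' (r + 2), hq' r, hp]
  have hc2 : (((N : ℝ) ^ (-(1 + ((r + 2 : ℕ) : ℝ) / 2)) : ℝ) : ℂ)
      = (((N : ℝ) ^ (-(1 + (r : ℝ) / 2)) : ℝ) : ℂ) / (N : ℂ) := by
    rw [hermiteAux_c_two N hN r]
    push_cast
    ring
  have hsum_eq : ∑ s ∈ Finset.range (r + 1), q (r - s) * q s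
      = ∑ s ∈ Finset.range (r + 1),
          (((N : ℝ) ^ (-(1 + ((r + 2 : ℕ) : ℝ) / 2)) : ℝ) : ℂ) *
            ((∑ a ∈ sfin, a ^ (r - s)) * (∑ a ∈ sfin, a ^ s)) := by
    apply Finset.sum_congr rfl
    intro s hs
    have hsr : s ≤ r := Nat.lt_succ_iff.1 (Finset.mem_range.1 hs)
    rw [hq' (r - s), hq' s, ← hermiteAux_c_mul N hN r s hsr]
    push_cast
    ring
  rw [hsum_eq, hc2, ← Finset.mul_sum]
  have hsum_eq2 : ∑ s ∈ Finset.range (r + 1),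
        (∑ a ∈ sfin, a ^ (r - s)) * (∑ a ∈ sfin, a ^ s)
      = ∑ i ∈ Finset.range (r + 1), (∑ a ∈ sfin, a ^ i) * (∑ a ∈ sfin, a ^ (r - i)) := by
    apply Finset.sum_congr rfl
    intro s _
    ring
  rw [hsum_eq2]
  ring
end
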